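/- Let 𝓛 be the lamplighter group, F̃_n = {(t, K) ∈ 𝓛 : t ∈ [0,n]∩ℤ and K ⊆ [0,n]∩ℤ}, and define l : ℕ → ℕ by l(1) = 1 and l(n) = 3^{l(n−1)} for n ≥ 2. Then the subsequence (F̃_{l(n)}) is tempered: there exists a constant C > 0 such that for all n ≥ 2, |⋃_{i=1}^{n−1} F̃_{l(n)} · (F̃_{l(i)})⁻¹| ≤ C · |F̃_{l(n)}|. -/

import Mathlib

open scoped symmDiff

/-- The lamplighter group `ℤ ≀ ℤ₂`, realized as pairs `(t, K)` with `t ∈ ℤ` the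
position of the lamplighter and `K` a finite set of integers (the lamps turned on). -/
structure Lamp where
  pos : ℤ
  lamps : Finset ℤ
deriving DecidableEq

namespace Lamp

/-- The shift `t + K` of a finite set of integers. -/
def shift (t : ℤ) (K : Finset ℤ) : Finset ℤ := K.image (t + ·)

lemma mem_shift {t x : ℤ} {K : Finset ℤ} : x ∈ shift t K ↔ x - t ∈ K := by
  constructor
  · rintro h
    simp only [shift, Finset.mem_image] at h
    obtain ⟨k, hk, rfl⟩ := h
    simpa using hk
  · intro h
    simp only [shift, Finset.mem_image]
    exact ⟨x - t, h, by ring⟩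

lemma shift_symmDiff (t : ℤ) (A B : Finset ℤ) :
    shift t (A ∆ B) = shift t A ∆ shift t B := by
  ext x
  simp [mem_shift, Finset.mem_symmDiff]

lemma shift_shift (s t : ℤ) (K : Finset ℤ) : shift s (shift t K) = shift (s + t) K := by
  ext x
  simp [mem_shift, sub_sub]

lemma shift_zero (K : Finset ℤ) : shift 0 K = K := by
  ext x; simp [mem_shift]

lemma shift_empty (t : ℤ) : shift t (∅ : Finset ℤ) = ∅ := by
  simp [shift]

lemma empty_symmDiff (A : Finset ℤ) : (∅ : Finset ℤ) ∆ A = A := by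
  ext x; simp [Finset.mem_symmDiff]

lemma symmDiff_empty (A : Finset ℤ) : A ∆ (∅ : Finset ℤ) = A := by
  ext x; simp [Finset.mem_symmDiff]

lemma symmDiff_self' (A : Finset ℤ) : A ∆ A = (∅ : Finset ℤ) := by
  ext x; simp [Finset.mem_symmDiff]

instance : Mul Lamp := ⟨fun a b => ⟨a.pos + b.pos, a.lamps ∆ shift a.pos b.lamps⟩⟩
instance : One Lamp := ⟨⟨0, ∅⟩⟩
instance : Inv Lamp := ⟨fun a => ⟨-a.pos, shift (-a.pos) a.lamps⟩⟩

@[simp] lemma mul_pos' (a b : Lamp) : (a * b).pos = a.pos + b.pos := rfl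
@[simp] lemma mul_lamps (a b : Lamp) : (a * b).lamps = a.lamps ∆ shift a.pos b.lamps := rfl
@[simp] lemma one_pos' : (1 : Lamp).pos = 0 := rfl
@[simp] lemma one_lamps : (1 : Lamp).lamps = ∅ := rfl
@[simp] lemma inv_pos' (a : Lamp) : a⁻¹.pos = -a.pos := rfl
@[simp] lemma inv_lamps (a : Lamp) : a⁻¹.lamps = shift (-a.pos) a.lamps := rfl

@[ext] lemma ext' {a b : Lamp} (h1 : a.pos = b.pos) (h2 : a.lamps = b.lamps) : a = b := by
  cases a; cases b; simp_all

instance : Group Lamp where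
  mul_assoc a b c := by
    refine ext' ?_ ?_
    · simp [add_assoc]
    · simp [shift_symmDiff, shift_shift, symmDiff_assoc]
  one_mul a := by
    refine ext' ?_ ?_
    · simp
    · rw [mul_lamps, one_lamps, one_pos', shift_zero, empty_symmDiff]
  mul_one a := by
    refine ext' ?_ ?_
    · simp
    · rw [mul_lamps, one_lamps, shift_empty, symmDiff_empty]
  inv_mul_cancel a := by
    refine ext' ?_ ?_
    · simp
    · rw [mul_lamps, inv_lamps, inv_pos', symmDiff_self', one_lamps]

/-- The standard right Følner sets `F̃ n` of the lamplighter group. -/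
def Ftilde (n : ℕ) : Set Lamp :=
  {x | x.pos ∈ Set.Icc (0 : ℤ) n ∧ ∀ k ∈ x.lamps, k ∈ Set.Icc (0 : ℤ) n}

end Lamp

open Pointwise

namespace LampAux

open Lamp Finset

/-- The finset of integers positions/lamp windows we use to overcount the product set. -/
noncomputable def Tfin (m k : ℕ) : Finset Lamp :=
  (Finset.Icc (-(k:ℤ)) (m:ℤ)).biUnion fun t =>
    ((Finset.Icc (0:ℤ) (m:ℤ) ∪ Finset.Icc t (t + (k:ℤ))).powerset).image fun K => ⟨t, K⟩

noncomputable def Ffin (m : ℕ) : Finset Lamp :=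
  ((Finset.Icc (0:ℤ) (m:ℤ)) ×ˢ (Finset.Icc (0:ℤ) (m:ℤ)).powerset).image fun p => ⟨p.1, p.2⟩

lemma Ftilde_eq_coe_Ffin (m : ℕ) : Ftilde m = ↑(Ffin m) := by
  ext x
  simp only [Ftilde, Set.mem_setOf_eq, Ffin, Finset.coe_image, Set.mem_image,
    Finset.mem_coe, Finset.mem_product, Finset.mem_powerset]
  constructor
  · rintro ⟨h1, h2⟩
    refine ⟨(x.pos, x.lamps), ⟨?_, ?_⟩, rfl⟩
    · simpa using h1
    · intro j hj; simpa using h2 j hj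
  · rintro ⟨⟨t, K⟩, ⟨h1, h2⟩, rfl⟩
    refine ⟨by simpa using h1, fun j hj => by simpa using h2 hj⟩

lemma ncard_Ftilde (m : ℕ) : (Ftilde m).ncard = (m + 1) * 2 ^ (m + 1) := by
  rw [Ftilde_eq_coe_Ffin, Set.ncard_coe_finset, Ffin,
    Finset.card_image_of_injective _ (fun p q h => by
      cases p; cases q; simpa [Lamp.mk.injEq, Prod.ext_iff] using h),
    Finset.card_product, Finset.card_powerset, Int.card_Icc]
  simp

lemma prod_subset_Tfin {m k j : ℕ} (hj : j ≤ k) :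
    Ftilde m * (Ftilde j)⁻¹ ⊆ ↑(Tfin m k) := by
  rintro x hx
  rw [Set.mem_mul] at hx
  obtain ⟨a, ha, c, hc, rfl⟩ := hx
  rw [Set.mem_inv] at hc
  set b := c⁻¹ with hb
  have hcb : c = b⁻¹ := by rw [hb, inv_inv]
  obtain ⟨ha1, ha2⟩ := ha
  obtain ⟨hb1, hb2⟩ := hc
  simp only [Set.mem_Icc] at ha1 hb1
  have hpos : (a * c).pos = a.pos - b.pos := by
    rw [hcb]; simp [sub_eq_add_neg]
  have hlamps : (a * c).lamps = a.lamps ∆ Lamp.shift (a.pos - b.pos) b.lamps := by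
    rw [hcb]; simp [Lamp.shift_shift, sub_eq_add_neg]
  simp only [Tfin, Finset.coe_biUnion, Set.mem_iUnion, Finset.coe_image, Set.mem_image,
    Finset.mem_coe, Finset.mem_powerset, Finset.mem_Icc]
  refine ⟨(a * c).pos, ⟨⟨?_, ?_⟩, (a * c).lamps, ?_, rfl⟩⟩
  · rw [hpos]; omega
  · rw [hpos]; omega
  · intro q hq
    rw [hlamps, Finset.mem_symmDiff] at hq
    rw [Finset.mem_union, Finset.mem_Icc, Finset.mem_Icc]
    rcases hq with ⟨hq, -⟩ | ⟨hq, -⟩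
    · have := ha2 q hq
      simp only [Set.mem_Icc] at this
      left; omega
    · rw [Lamp.mem_shift] at hq
      have := hb2 _ hq
      simp only [Set.mem_Icc] at this
      right
      have hjk : (j : ℤ) ≤ k := by exact_mod_cast hj
      omega

lemma pow_aux (k : ℕ) : (2 * k + 1) * 2 ^ k ≤ 5 * 3 ^ k := by
  induction k with
  | zero => norm_num
  | succ k ih =>
    have h23 : 2 ^ k ≤ 3 ^ k := Nat.pow_le_pow_left (by norm_num) k
    have : (2 * (k + 1) + 1) * 2 ^ (k + 1) = 2 * ((2 * k + 1) * 2 ^ k) + 4 * 2 ^ k := by ring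
    rw [this, pow_succ]
    omega

lemma card_Tfin_le {m k : ℕ} (hm : m = 3 ^ k) :
    (Tfin m k).card ≤ 6 * ((m + 1) * 2 ^ (m + 1)) := by
  have hkm : k ≤ m := by
    rw [hm]; exact le_of_lt (Nat.lt_pow_self (by norm_num : 1 < 3))
  have hkmz : (k : ℤ) ≤ (m : ℤ) := by exact_mod_cast hkm
  -- termwise bound
  have hterm : ∀ t ∈ Finset.Icc (-(k:ℤ)) (m:ℤ),
      ((((Finset.Icc (0:ℤ) (m:ℤ) ∪ Finset.Icc t (t + (k:ℤ)))).powerset).image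
        (fun K => (⟨t, K⟩ : Lamp))).card ≤
        2 ^ (m + 1) * 2 ^ (if t < 0 then k else (t + k - m).toNat) := by
    intro t ht
    simp only [Finset.mem_Icc] at ht
    refine le_trans (Finset.card_image_le) ?_
    rw [Finset.card_powerset]
    rw [← pow_add]
    apply Nat.pow_le_pow_right (by norm_num)
    have hsub : Finset.Icc (0:ℤ) (m:ℤ) ∪ Finset.Icc t (t + (k:ℤ)) ⊆
        Finset.Icc (0:ℤ) (m:ℤ) ∪
          (if t < 0 then Finset.Icc t (-1) else Finset.Icc ((m:ℤ)+1) (t + k)) := by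
      intro x hx
      simp only [Finset.mem_union, Finset.mem_Icc] at hx ⊢
      split <;> rename_i h <;> simp only [Finset.mem_Icc] <;> omega
    refine le_trans (Finset.card_le_card hsub) ?_
    refine le_trans (Finset.card_union_le _ _) ?_
    have h1 : (Finset.Icc (0:ℤ) (m:ℤ)).card = m + 1 := by
      rw [Int.card_Icc]; omega
    rw [h1]
    have h2 : (if t < 0 then Finset.Icc t (-1:ℤ) else Finset.Icc ((m:ℤ)+1) (t + k)).card ≤
        (if t < 0 then k else (t + k - m).toNat) := by
      split <;> rename_i h <;> rw [Int.card_Icc] <;> omega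
    omega
  have hcard : (Tfin m k).card ≤
      ∑ t ∈ Finset.Icc (-(k:ℤ)) (m:ℤ),
        2 ^ (m + 1) * 2 ^ (if t < 0 then k else (t + k - m).toNat) :=
    le_trans (Finset.card_biUnion_le) (Finset.sum_le_sum hterm)
  rw [← Finset.mul_sum] at hcard
  -- bound the remaining sum by 6 * (m + 1)
  have hsum : ∑ t ∈ Finset.Icc (-(k:ℤ)) (m:ℤ),
      2 ^ (if t < 0 then k else (t + k - m).toNat) ≤ 6 * (m + 1) := by
    have hsplit : Finset.Icc (-(k:ℤ)) (m:ℤ) =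
        Finset.Icc (-(k:ℤ)) (-1) ∪ Finset.Icc 0 (m:ℤ) := by
      ext x; simp only [Finset.mem_Icc, Finset.mem_union]; omega
    have hdisj : Disjoint (Finset.Icc (-(k:ℤ)) (-1)) (Finset.Icc 0 (m:ℤ)) := by
      rw [Finset.disjoint_left]; intro x hx hx'
      simp only [Finset.mem_Icc] at hx hx'; omega
    rw [hsplit, Finset.sum_union hdisj]
    have hA : ∑ t ∈ Finset.Icc (-(k:ℤ)) (-1),
        2 ^ (if t < 0 then k else (t + k - m).toNat) ≤ k * 2 ^ k := by
      refine le_trans (Finset.sum_le_card_nsmul _ _ (2 ^ k) ?_) ?_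
      · intro t ht
        simp only [Finset.mem_Icc] at ht
        rw [if_pos (by omega)]
      · rw [Int.card_Icc, smul_eq_mul]
        have : ((-1 : ℤ) + 1 - (-(k:ℤ))).toNat = k := by omega
        rw [this]
    have hB : ∑ t ∈ Finset.Icc (0:ℤ) (m:ℤ),
        2 ^ (if t < 0 then k else (t + k - m).toNat) ≤ m + (k + 1) * 2 ^ k := by
      have hsplit2 : Finset.Icc (0:ℤ) (m:ℤ) =
          Finset.Icc 0 ((m:ℤ) - k - 1) ∪ Finset.Icc ((m:ℤ) - k) (m:ℤ) := by
        ext x; simp only [Finset.mem_Icc, Finset.mem_union]; omega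
      have hdisj2 : Disjoint (Finset.Icc (0:ℤ) ((m:ℤ) - k - 1))
          (Finset.Icc ((m:ℤ) - k) (m:ℤ)) := by
        rw [Finset.disjoint_left]; intro x hx hx'
        simp only [Finset.mem_Icc] at hx hx'; omega
      rw [hsplit2, Finset.sum_union hdisj2]
      have hB1 : ∑ t ∈ Finset.Icc (0:ℤ) ((m:ℤ) - k - 1),
          2 ^ (if t < 0 then k else (t + k - m).toNat) ≤ m := by
        refine le_trans (Finset.sum_le_card_nsmul _ _ 1 ?_) ?_
        · intro t ht
          simp only [Finset.mem_Icc] at ht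
          rw [if_neg (by omega)]
          have : ((t : ℤ) + k - m).toNat = 0 := by omega
          rw [this, pow_zero]
        · rw [Int.card_Icc, smul_eq_mul, mul_one]; omega
      have hB2 : ∑ t ∈ Finset.Icc ((m:ℤ) - k) (m:ℤ),
          2 ^ (if t < 0 then k else (t + k - m).toNat) ≤ (k + 1) * 2 ^ k := by
        refine le_trans (Finset.sum_le_card_nsmul _ _ (2 ^ k) ?_) ?_
        · intro t ht
          simp only [Finset.mem_Icc] at ht
          split
          · exact le_rfl
          · exact Nat.pow_le_pow_right (by norm_num) (by omega)
        · rw [Int.card_Icc, smul_eq_mul]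
          have : ((m:ℤ) + 1 - ((m:ℤ) - k)).toNat = k + 1 := by omega
          rw [this]
      exact Nat.add_le_add hB1 hB2
    have h5 : (2 * k + 1) * 2 ^ k ≤ 5 * m := by
      calc (2 * k + 1) * 2 ^ k ≤ 5 * 3 ^ k := pow_aux k
        _ = 5 * m := by rw [hm]
    calc (∑ t ∈ Finset.Icc (-(k:ℤ)) (-1), 2 ^ (if t < 0 then k else (t + k - m).toNat)) +
        ∑ t ∈ Finset.Icc (0:ℤ) (m:ℤ), 2 ^ (if t < 0 then k else (t + k - m).toNat)
        ≤ k * 2 ^ k + (m + (k + 1) * 2 ^ k) := Nat.add_le_add hA hB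
      _ = m + (2 * k + 1) * 2 ^ k := by ring
      _ ≤ m + 5 * m := by omega
      _ ≤ 6 * (m + 1) := by omega
  calc (Tfin m k).card ≤ 2 ^ (m + 1) * ∑ t ∈ Finset.Icc (-(k:ℤ)) (m:ℤ),
        2 ^ (if t < 0 then k else (t + k - m).toNat) := hcard
    _ ≤ 2 ^ (m + 1) * (6 * (m + 1)) := Nat.mul_le_mul_left _ hsum
    _ = 6 * ((m + 1) * 2 ^ (m + 1)) := by ring

end LampAux


/-- With `l 1 = 1` and `l n = 3 ^ l (n-1)` for `n ≥ 2`, the subsequence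
`F̃ (l n)` of the standard right Følner sequence of the lamplighter group is
tempered: `|⋃_{i=1}^{n-1} F̃ (l n) · (F̃ (l i))⁻¹| ≤ C · |F̃ (l n)|`. -/
theorem stmt11 (l : ℕ → ℕ) (hl1 : l 1 = 1) (hl : ∀ n ≥ 2, l n = 3 ^ l (n - 1)) :
    ∃ C : ℝ, 0 < C ∧ ∀ n ≥ 2,
      (((⋃ i ∈ Finset.Icc 1 (n - 1),
          Lamp.Ftilde (l n) * (Lamp.Ftilde (l i))⁻¹).ncard : ℝ)) ≤
        C * ((Lamp.Ftilde (l n)).ncard : ℝ) := by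
  refine ⟨6, by norm_num, ?_⟩
  have hmono : ∀ i j : ℕ, 1 ≤ i → i ≤ j → l i ≤ l j := by
    intro i j h1 hij
    induction j, hij using Nat.le_induction with
    | base => exact le_rfl
    | succ j hij ih =>
      rw [hl (j + 1) (by omega)]
      simp only [Nat.add_sub_cancel]
      exact le_trans ih (le_of_lt (Nat.lt_pow_self (by norm_num : 1 < 3)))
  intro n hn
  set k := l (n - 1) with hk
  set m := l n with hmdef
  have hm : m = 3 ^ k := hl n hn
  have hsub : (⋃ i ∈ Finset.Icc 1 (n - 1), Lamp.Ftilde m * (Lamp.Ftilde (l i))⁻¹)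
      ⊆ ↑(LampAux.Tfin m k) := by
    intro x hx
    simp only [Set.mem_iUnion] at hx
    obtain ⟨i, hi, hx⟩ := hx
    simp only [Finset.mem_Icc] at hi
    exact LampAux.prod_subset_Tfin (hmono i (n - 1) hi.1 hi.2) hx
  have h1 : (⋃ i ∈ Finset.Icc 1 (n - 1),
      Lamp.Ftilde m * (Lamp.Ftilde (l i))⁻¹).ncard ≤ (LampAux.Tfin m k).card := by
    rw [← Set.ncard_coe_finset]
    exact Set.ncard_le_ncard hsub (Finset.finite_toSet _)
  have h2 := LampAux.card_Tfin_le hm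
  have h3 := LampAux.ncard_Ftilde m
  have hfin : (⋃ i ∈ Finset.Icc 1 (n - 1),
      Lamp.Ftilde m * (Lamp.Ftilde (l i))⁻¹).ncard ≤ 6 * (Lamp.Ftilde m).ncard := by
    rw [h3]; omega
  exact_mod_cast hfin
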